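/- For any r > 0, the restriction of h(z,w) = (2·z·conj(w), |z|² − |w|²) to the sphere of radius r in ℂ² is an open map onto the sphere of radius r² in ℂ × ℝ. -/

import Mathlib

/-- The quadratic model of the Hopf quotient map. -/
noncomputable def hopfModel (p : ℂ × ℂ) : ℂ × ℝ :=
  (2 * p.1 * (starRingEnd ℂ) p.2, ‖p.1‖ ^ 2 - ‖p.2‖ ^ 2)

lemma abs_eq_of_sq_eq {a b : ℝ} (ha : 0 ≤ a) (hb : 0 ≤ b) (h : a ^ 2 = b ^ 2) : a = b := by
  nlinarith

lemma hopf_fiber {r : ℝ} (hr : 0 < r) {p q : ℂ × ℂ}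
    (hp : ‖p.1‖ ^ 2 + ‖p.2‖ ^ 2 = r ^ 2)
    (hq : ‖q.1‖ ^ 2 + ‖q.2‖ ^ 2 = r ^ 2)
    (h : hopfModel p = hopfModel q) :
    ∃ l : ℂ, ‖l‖ = 1 ∧ q = (l * p.1, l * p.2) := by
  have h1 : 2 * p.1 * (starRingEnd ℂ) p.2 = 2 * q.1 * (starRingEnd ℂ) q.2 :=
    congrArg Prod.fst h
  have h2 : ‖p.1‖ ^ 2 - ‖p.2‖ ^ 2
      = ‖q.1‖ ^ 2 - ‖q.2‖ ^ 2 := congrArg Prod.snd h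
  have ha1 : ‖p.1‖ = ‖q.1‖ :=
    abs_eq_of_sq_eq (norm_nonneg _) (norm_nonneg _) (by linarith)
  have ha2 : ‖p.2‖ = ‖q.2‖ :=
    abs_eq_of_sq_eq (norm_nonneg _) (norm_nonneg _) (by linarith)
  have h1' : p.1 * (starRingEnd ℂ) p.2 = q.1 * (starRingEnd ℂ) q.2 := by
    linear_combination h1 / 2
  by_cases hz : p.1 = 0
  · have hq1 : q.1 = 0 := by
      have : ‖q.1‖ = 0 := by rw [← ha1, hz, norm_zero]
      exact norm_eq_zero.mp this
    have hp2 : p.2 ≠ 0 := by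
      intro h0
      rw [hz, h0] at hp
      simp at hp
      nlinarith
    refine ⟨q.2 / p.2, ?_, ?_⟩
    · rw [norm_div]
      rw [show ‖q.2‖ = ‖q.2‖ from rfl, show ‖p.2‖ = ‖p.2‖ from rfl, ← ha2]
      field_simp [norm_ne_zero_iff.mpr hp2]
    · ext
      · simp [hq1, hz]
      · simp only
        field_simp
  · have hl : ‖q.1 / p.1‖ = 1 := by
      rw [norm_div]
      rw [show ‖q.1‖ = ‖q.1‖ from rfl, show ‖p.1‖ = ‖p.1‖ from rfl, ← ha1]
      field_simp [norm_ne_zero_iff.mpr hz]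
    have hll : (q.1 / p.1) * (starRingEnd ℂ) (q.1 / p.1) = 1 := by
      rw [Complex.mul_conj]
      norm_cast
      rw [Complex.normSq_eq_norm_sq]
      rw [show ‖q.1 / p.1‖ = ‖q.1 / p.1‖ from rfl, hl, one_pow]
    refine ⟨q.1 / p.1, hl, ?_⟩
    have hc : (starRingEnd ℂ) p.2 = (q.1 / p.1) * (starRingEnd ℂ) q.2 := by
      field_simp
      linear_combination h1'
    have hp2 : p.2 = (starRingEnd ℂ) (q.1 / p.1) * q.2 := by
      have := congrArg (starRingEnd ℂ) hc
      simpa [mul_comm] using this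
    refine Prod.ext ?_ ?_
    · simp only
      field_simp
    · show q.2 = q.1 / p.1 * p.2
      rw [hp2, ← mul_assoc, hll, one_mul]

lemma hopf_invariant {l : ℂ} (hl : ‖l‖ = 1) (p : ℂ × ℂ) :
    hopfModel (l * p.1, l * p.2) = hopfModel p := by
  have hll : l * (starRingEnd ℂ) l = 1 := by
    rw [Complex.mul_conj]
    norm_cast
    rw [Complex.normSq_eq_norm_sq, show ‖l‖ = ‖l‖ from rfl, hl, one_pow]
  have habs : ‖l‖ = 1 := hl
  unfold hopfModel
  simp only [map_mul, map_mul, norm_mul, habs, one_mul]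
  refine Prod.ext ?_ rfl
  simp only
  ring_nf
  linear_combination 2 * p.1 * (starRingEnd ℂ) p.2 * hll

lemma hopf_surj {r : ℝ} (hr : 0 < r) (q : ℂ × ℝ)
    (hq : ‖q.1‖ ^ 2 + q.2 ^ 2 = (r ^ 2) ^ 2) :
    ∃ p : ℂ × ℂ, ‖p.1‖ ^ 2 + ‖p.2‖ ^ 2 = r ^ 2 ∧ hopfModel p = q := by
  by_cases ht : r ^ 2 + q.2 = 0
  · have hc : q.1 = 0 := by
      have : ‖q.1‖ ^ 2 = 0 := by nlinarith
      simpa using pow_eq_zero_iff two_ne_zero |>.mp this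
    refine ⟨(0, (r : ℂ)), ?_, ?_⟩
    · simp [Complex.norm_real, Real.norm_eq_abs, abs_of_pos hr]
    · unfold hopfModel
      refine Prod.ext (by simp [hc]) ?_
      simp [Complex.norm_real, Real.norm_eq_abs, abs_of_pos hr]
      nlinarith
  · have htpos : 0 < r ^ 2 + q.2 := by
      rcases lt_or_eq_of_le (by nlinarith : -(r^2) ≤ q.2) with h | h
      · linarith
      · exact absurd (by linarith) ht
    set z : ℝ := Real.sqrt ((r ^ 2 + q.2) / 2) with hz
    have hzpos : 0 < z := Real.sqrt_pos.mpr (by linarith)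
    have hzsq : z ^ 2 = (r ^ 2 + q.2) / 2 := Real.sq_sqrt (by linarith)
    refine ⟨((z : ℂ), (starRingEnd ℂ) (q.1 / (2 * z))), ?_, ?_⟩
    · have habs2 : ‖(starRingEnd ℂ) (q.1 / (2 * (z : ℂ)))‖ ^ 2
          = ‖q.1‖ ^ 2 / (4 * z ^ 2) := by
        rw [Complex.norm_conj, norm_div]
        rw [norm_mul]
        simp [Complex.norm_real, Real.norm_eq_abs, abs_of_pos hzpos]
        ring
      simp only [habs2]
      rw [Complex.norm_real, Real.norm_eq_abs, abs_of_pos hzpos]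
      rw [hzsq]
      have h4 : ‖q.1‖ ^ 2 = (r^2 + q.2) * (r^2 - q.2) := by nlinarith
      rw [h4]
      field_simp
      ring
    · unfold hopfModel
      have hz0 : (z : ℂ) ≠ 0 := by
        norm_cast; exact ne_of_gt hzpos
      refine Prod.ext ?_ ?_
      · simp only [Complex.conj_conj]
        field_simp
      · simp only
        have habs2 : ‖(starRingEnd ℂ) (q.1 / (2 * (z : ℂ)))‖ ^ 2
            = ‖q.1‖ ^ 2 / (4 * z ^ 2) := by
          rw [Complex.norm_conj, norm_div]
          rw [norm_mul]
          simp [Complex.norm_real, Real.norm_eq_abs, abs_of_pos hzpos]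
          ring
        rw [habs2, Complex.norm_real, Real.norm_eq_abs, abs_of_pos hzpos, hzsq]
        have h4 : ‖q.1‖ ^ 2 = (r^2 + q.2) * (r^2 - q.2) := by nlinarith
        rw [h4]
        field_simp
        ring

lemma sqrt_eq_iff_sq {r x : ℝ} (hr : 0 ≤ r) (hx : 0 ≤ x) : Real.sqrt x = r ↔ x = r ^ 2 :=
  ⟨fun h => by rw [← h, Real.sq_sqrt hx], fun h => by rw [h, Real.sqrt_sq hr]⟩

lemma hopfModel_continuous : Continuous hopfModel := by
  unfold hopfModel
  exact Continuous.prodMk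
    ((continuous_const.mul continuous_fst).mul (Complex.continuous_conj.comp continuous_snd))
    (((continuous_norm.comp continuous_fst).pow 2).sub
      ((continuous_norm.comp continuous_snd).pow 2))

/-- For `r > 0`, the restriction of `hopfModel` to the sphere of radius `r`
in `ℂ²` is an open map onto the sphere of radius `r²` in `ℂ × ℝ`. -/
theorem hopfModel_sphere_open (r : ℝ) (hr : 0 < r)
    (H : {p : ℂ × ℂ // Real.sqrt (‖p.1‖ ^ 2 + ‖p.2‖ ^ 2) = r} →
         {q : ℂ × ℝ // Real.sqrt (‖q.1‖ ^ 2 + q.2 ^ 2) = r ^ 2})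
    (hH : ∀ p, (H p : ℂ × ℝ) = hopfModel p) :
    IsOpenMap H ∧ Function.Surjective H := by
  have memS : ∀ p : {p : ℂ × ℂ // Real.sqrt (‖p.1‖ ^ 2 + ‖p.2‖ ^ 2) = r},
      ‖(p : ℂ × ℂ).1‖ ^ 2 + ‖(p : ℂ × ℂ).2‖ ^ 2 = r ^ 2 := fun p =>
    (sqrt_eq_iff_sq hr.le (by positivity)).mp p.2
  have memT : ∀ q : {q : ℂ × ℝ // Real.sqrt (‖q.1‖ ^ 2 + q.2 ^ 2) = r ^ 2},
      ‖(q : ℂ × ℝ).1‖ ^ 2 + (q : ℂ × ℝ).2 ^ 2 = (r ^ 2) ^ 2 := fun q =>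
    (sqrt_eq_iff_sq (by positivity) (by positivity)).mp q.2
  -- continuity of H
  have hcont : Continuous H := by
    rw [continuous_induced_rng]
    have : Subtype.val ∘ H = hopfModel ∘ Subtype.val := funext fun p => hH p
    rw [this]
    exact hopfModel_continuous.comp continuous_subtype_val
  -- surjectivity
  have hsurj : Function.Surjective H := by
    intro q
    obtain ⟨p, hp, hpq⟩ := hopf_surj hr q.1 (memT q)
    have hmem : Real.sqrt (‖p.1‖ ^ 2 + ‖p.2‖ ^ 2) = r :=
      (sqrt_eq_iff_sq hr.le (by positivity)).mpr hp
    exact ⟨⟨p, hmem⟩, Subtype.ext (by rw [hH]; exact hpq)⟩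
  -- compactness of the domain
  have hcompS : CompactSpace
      {p : ℂ × ℂ // Real.sqrt (‖p.1‖ ^ 2 + ‖p.2‖ ^ 2) = r} := by
    apply isCompact_iff_compactSpace.mp
    apply Metric.isCompact_of_isClosed_isBounded
    · exact isClosed_eq (Real.continuous_sqrt.comp
        (((continuous_norm.comp continuous_fst).pow 2).add
          ((continuous_norm.comp continuous_snd).pow 2))) continuous_const
    · apply Bornology.IsBounded.subset (Metric.isBounded_closedBall (x := (0 : ℂ × ℂ)) (r := r))
      intro p hp
      replace hp : Real.sqrt (‖p.1‖ ^ 2 + ‖p.2‖ ^ 2) = r := hp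
      have hp' : ‖p.1‖ ^ 2 + ‖p.2‖ ^ 2 = r ^ 2 :=
        (sqrt_eq_iff_sq hr.le (by positivity)).mp hp
      simp only [Metric.mem_closedBall, dist_zero_right]
      rw [Prod.norm_def]
      have h1 : ‖p.1‖ ≤ r := by
        nlinarith [norm_nonneg p.1, norm_nonneg p.2,
          (show ‖p.1‖ = ‖p.1‖ from rfl), sq_nonneg (‖p.2‖)]
      have h2 : ‖p.2‖ ≤ r := by
        nlinarith [norm_nonneg p.2, (show ‖p.2‖ = ‖p.2‖ from rfl),
          sq_nonneg (‖p.1‖)]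
      exact max_le h1 h2
  -- H is a quotient map
  have hqm : Topology.IsQuotientMap H :=
    (hcont.isClosedMap).isQuotientMap hcont hsurj
  refine ⟨?_, hsurj⟩
  have rotmem : ∀ (l : ℂ), ‖l‖ = 1 →
      ∀ p : {p : ℂ × ℂ // Real.sqrt (‖p.1‖ ^ 2 + ‖p.2‖ ^ 2) = r},
      Real.sqrt (‖l * (p : ℂ × ℂ).1‖ ^ 2
        + ‖l * (p : ℂ × ℂ).2‖ ^ 2) = r := by
    intro l hl p
    have habs : ‖l‖ = 1 := hl
    rw [norm_mul, norm_mul, habs, one_mul, one_mul]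
    exact p.2
  intro U hU
  rw [← hqm.isOpen_preimage]
  have key : H ⁻¹' (H '' U) =
      ⋃ (l : {l : ℂ // ‖l‖ = 1}),
        (fun p : {p : ℂ × ℂ // Real.sqrt (‖p.1‖ ^ 2 + ‖p.2‖ ^ 2) = r} =>
          (⟨((l : ℂ) * (p : ℂ × ℂ).1, (l : ℂ) * (p : ℂ × ℂ).2),
            rotmem l l.2 p⟩ :
            {p : ℂ × ℂ // Real.sqrt (‖p.1‖ ^ 2 + ‖p.2‖ ^ 2) = r})) ⁻¹' U := by
    ext p
    simp only [Set.mem_preimage, Set.mem_image, Set.mem_iUnion]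
    constructor
    · rintro ⟨u, hu, huv⟩
      have heq : hopfModel (p : ℂ × ℂ) = hopfModel (u : ℂ × ℂ) := by
        rw [← hH, ← hH, huv]
      obtain ⟨l, hl, hu2⟩ := hopf_fiber hr (memS p) (memS u) heq
      refine ⟨⟨l, hl⟩, ?_⟩
      have heq2 : (⟨((l : ℂ) * (p : ℂ × ℂ).1, (l : ℂ) * (p : ℂ × ℂ).2), rotmem l hl p⟩ :
          {p : ℂ × ℂ // Real.sqrt (‖p.1‖ ^ 2 + ‖p.2‖ ^ 2) = r}) = u :=
        Subtype.ext hu2.symm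
      simpa [heq2] using hu
    · rintro ⟨l, hl⟩
      refine ⟨_, hl, ?_⟩
      apply Subtype.ext
      rw [hH, hH]
      exact hopf_invariant l.2 _
  rw [key]
  refine isOpen_iUnion fun l => ?_
  refine hU.preimage ?_
  exact Continuous.subtype_mk
    ((continuous_const.mul (continuous_subtype_val.fst)).prodMk
      (continuous_const.mul (continuous_subtype_val.snd))) _
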